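/- Let n, k be natural numbers with 0 < k ≤ n. Define the partial order on k-element subsets of {0,…,n−1} by {i_0<…<i_{k−1}} ≤ {j_0<…<j_{k−1}} iff i_t ≤ j_t for all t. For a k-subset I of {0,…,n−1}, if I = {i_0 < … < i_{k−1}}, and for 0 < l ≤ min{k,i} with i+k < n+l define I_i^l := {i−l,…,i−1} ∪ {n−1−k+l,…,n−1}. Then I ≤ I_i^l if and only if i_{l−1} ≤ i−1. -/

import Mathlib

/-- The sorted list of elements of a finset of naturals, in increasing order. -/
def sortedList (I : Finset ℕ) : List ℕ := I.sort (· ≤ ·)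

/-- The componentwise partial order on finsets of naturals: `I ≤ J` iff the `t`-th smallest
element of `I` is at most the `t`-th smallest element of `J` for every `t` (in particular the
cardinalities agree). -/
def fle (I J : Finset ℕ) : Prop := List.Forall₂ (· ≤ ·) (sortedList I) (sortedList J)

/-- The special `k`-subsets `I_i^l` of `{0, …, n-1}`:
`I_i^l = {i-l, …, i-1} ∪ {n-k+l, …, n-1}` when `i + k < n + l`, and
`I_i^l = {n-k, …, n-1}` otherwise. -/
def Iil (n k i l : ℕ) : Finset ℕ :=
  if i + k < n + l then Finset.Ico (i - l) i ∪ Finset.Ico (n - k + l) n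
  else Finset.Ico (n - k) n

private lemma sorted_getD_add (L : List ℕ) (hL : L.Pairwise (· < ·)) :
    ∀ d a, a + d < L.length → L.getD a 0 + d ≤ L.getD (a + d) 0 := by
  intro d
  induction d with
  | zero => simp
  | succ d ih =>
    intro a h
    show L.getD a 0 + (d + 1) ≤ L.getD (a + d + 1) 0
    have h1 : a + d < L.length := by omega
    have h2 : a + d + 1 < L.length := by omega
    have := ih a h1
    have hlt : L.getD (a+d) 0 < L.getD (a+d+1) 0 := by
      rw [List.getD_eq_getElem _ _ h1, List.getD_eq_getElem _ _ h2]
      exact hL.rel_get_of_lt (a := ⟨a+d, h1⟩) (b := ⟨a+d+1, h2⟩) (by simp)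
    omega

/-- For a `k`-subset `I = {i₀ < … < i_{k-1}}` of `{0,…,n-1}`, an index `i < n` and
`0 < l ≤ min{k, i}` with `i + k < n + l`, we have `I ≤ I_i^l` (componentwise order)
if and only if `i_{l-1} ≤ i - 1`. -/
theorem stmt0 (n k : ℕ) (hk : 0 < k) (hkn : k ≤ n)
    (I : Finset ℕ) (hIsub : I ⊆ Finset.range n) (hIcard : I.card = k)
    (i l : ℕ) (hi : i < n) (hl : 0 < l) (hlk : l ≤ k) (hli : l ≤ i)
    (hcond : i + k < n + l) :
    fle I (Iil n k i l) ↔ (sortedList I).getD (l - 1) 0 ≤ i - 1 := by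
  have hink : i ≤ n - k + l := by omega
  have hRsorted : (List.range' (i - l) l ++ List.range' (n - k + l) (k - l)).Pairwise (· < ·) := by
    refine List.pairwise_append.mpr ⟨List.pairwise_lt_range', List.pairwise_lt_range', ?_⟩
    intro a ha b hb
    rw [List.mem_range'_1] at ha hb
    omega
  have hRlen : (List.range' (i - l) l ++ List.range' (n - k + l) (k - l)).length = k := by
    simp; omega
  have hR : sortedList (Iil n k i l) = List.range' (i - l) l ++ List.range' (n - k + l) (k - l) := by
    have hfe : Iil n k i l
        = (List.range' (i - l) l ++ List.range' (n - k + l) (k - l)).toFinset := by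
      ext x
      simp only [Iil, if_pos hcond, Finset.mem_union, Finset.mem_Ico, List.mem_toFinset,
        List.mem_append, List.mem_range'_1]
      omega
    rw [sortedList, hfe]
    exact (List.toFinset_sort _ (hRsorted.imp ne_of_lt)).mpr (hRsorted.imp le_of_lt)
  have hRget : ∀ t, t < k →
      (List.range' (i - l) l ++ List.range' (n - k + l) (k - l)).getD t 0
        = if t < l then i - l + t else n - k + t := by
    intro t ht
    rw [List.getD_eq_getElem _ _ (by omega)]
    split
    · next h =>
      rw [List.getElem_append_left (by simpa using h)]
      simp
    · next h =>
      rw [List.getElem_append_right (by simpa using h)]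
      simp only [List.getElem_range', List.length_range']
      omega
  set S : List ℕ := sortedList I with hSdef
  have hSlen : S.length = k := by simp [hSdef, sortedList, hIcard]
  have hSsorted : S.Pairwise (· < ·) := (Finset.sortedLT_sort I).pairwise
  have hSmem : ∀ t, t < k → S.getD t 0 < n := by
    intro t ht
    rw [List.getD_eq_getElem _ _ (by omega)]
    have hmem : S[t]'(by omega) ∈ S := List.getElem_mem (by omega)
    have : S[t]'(by omega) ∈ I := Finset.mem_sort (α := ℕ) (· ≤ ·) |>.mp hmem
    simpa using hIsub this
  rw [fle, hR, ← hSdef, List.forall₂_iff_get]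
  constructor
  · rintro ⟨hlen, hget⟩
    have h1 : l - 1 < S.length := by omega
    have h2 : l - 1 < (List.range' (i - l) l ++ List.range' (n - k + l) (k - l)).length := by omega
    have key := hget (l - 1) h1 h2
    simp only [List.get_eq_getElem] at key
    rw [← List.getD_eq_getElem (d := 0) _ h1, ← List.getD_eq_getElem (d := 0) _ h2] at key
    rw [hRget _ (by omega), if_pos (by omega)] at key
    omega
  · intro hle
    refine ⟨by omega, ?_⟩
    intro t h1 h2
    simp only [List.get_eq_getElem]
    rw [← List.getD_eq_getElem (d := 0) _ h1, ← List.getD_eq_getElem (d := 0) _ h2,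
      hRget _ (by omega)]
    split
    · next ht =>
      have key := sorted_getD_add S hSsorted (l - 1 - t) t (by omega)
      rw [show t + (l - 1 - t) = l - 1 by omega] at key
      omega
    · next ht =>
      have key := sorted_getD_add S hSsorted (k - 1 - t) t (by omega)
      rw [show t + (k - 1 - t) = k - 1 by omega] at key
      have := hSmem (k - 1) (by omega)
      omega
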